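/- Let C_n be the cycle graph on n ≥ 4 vertices and let k be an integer with 2 ≤ k ≤ ⌊n/2⌋. Then for every j ∈ {0, 1, …, n−1}, the number θ_j = 2(1 − cos(2πj/n)) = 4 sin²(jπ/n) is an eigenvalue of the Laplacian matrix L(F_k(C_n)). -/

import Mathlib

open Finset Polynomial Real Matrix

noncomputable section

/-- The `k`-token graph of a simple graph `G`. -/
def tokenGraph {V : Type*} [DecidableEq V] (G : SimpleGraph V) (k : ℕ) :
    SimpleGraph {s : Finset V // s.card = k} where
  Adj A B := ∃ a b, G.Adj a b ∧ a ∈ A.1 ∧ b ∈ B.1 ∧ symmDiff A.1 B.1 = {a, b}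
  symm := by
    constructor
    rintro A B ⟨a, b, hab, ha, hb, hd⟩
    exact ⟨b, a, hab.symm, hb, ha, by rw [symmDiff_comm, hd, Finset.pair_comm]⟩
  loopless := by
    constructor
    rintro A ⟨a, b, hab, ha, hb, hd⟩
    rw [symmDiff_self, Finset.bot_eq_empty] at hd
    exact (Finset.insert_ne_empty a {b}) hd.symm

/-- The Laplacian matrix (over ℝ) of a finite simple graph. -/
def lapMat {V : Type*} [Fintype V] [DecidableEq V] (G : SimpleGraph V) : Matrix V V ℝ :=
  letI := Classical.decRel G.Adj
  G.lapMatrix ℝ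

/-- The Laplacian matrix (over ℂ) of a finite simple graph. -/
def lapMatC {V : Type*} [Fintype V] [DecidableEq V] (G : SimpleGraph V) : Matrix V V ℂ :=
  letI := Classical.decRel G.Adj
  G.lapMatrix ℂ

/-- The Laplacian eigenvalues of `G`, with multiplicity, in nondecreasing order. -/
def lapSpec {V : Type*} [Fintype V] [DecidableEq V] (G : SimpleGraph V) : List ℝ :=
  ((lapMat G).charpoly.roots).sort (· ≤ ·)

/-- The algebraic connectivity: the second-smallest Laplacian eigenvalue. -/
def algConn {V : Type*} [Fintype V] [DecidableEq V] (G : SimpleGraph V) : ℝ :=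
  (lapSpec G).getD 1 0

/-- The largest Laplacian eigenvalue (Laplacian spectral radius). -/
def lapSpecRadius {V : Type*} [Fintype V] [DecidableEq V] (G : SimpleGraph V) : ℝ :=
  (lapSpec G).getLastD 0

/-- `μ` is an eigenvalue of the Laplacian matrix of `G`. -/
def IsLapEigen {V : Type*} [Fintype V] [DecidableEq V] (G : SimpleGraph V) (μ : ℝ) : Prop :=
  ∃ v : V → ℝ, v ≠ 0 ∧ (lapMat G).mulVec v = μ • v

/-- The induced subgraph of `G` on the complement of the vertex `i` (i.e. `G ∖ i`). -/
def deleteVert {V : Type*} (G : SimpleGraph V) (i : V) : SimpleGraph {v : V // v ≠ i} :=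
  SimpleGraph.comap Subtype.val G

/-- The cycle graph on `ℤ/nℤ`, where `i` is adjacent to `i ± 1`. -/
def cycleG (n : ℕ) : SimpleGraph (ZMod n) where
  Adj x y := x ≠ y ∧ (x - y = 1 ∨ y - x = 1)
  symm := by constructor; rintro x y ⟨hxy, h⟩; exact ⟨hxy.symm, h.symm⟩
  loopless := by constructor; rintro x ⟨hx, _⟩; exact hx rfl

/-- The inclusion matrix from `h`-subsets to `k`-subsets: rows indexed by `k`-subsets `A`,
columns by `h`-subsets `X`, with entry `1` if `X ⊆ A` and `0` otherwise. -/
def inclMatrix (V : Type*) [Fintype V] [DecidableEq V] (h k : ℕ) :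
    Matrix {s : Finset V // s.card = k} {s : Finset V // s.card = h} ℝ :=
  fun A X => if X.1 ⊆ A.1 then 1 else 0

/-- The `(n;k)`-binomial matrix: rows indexed by `k`-subsets `A`, columns by vertices `j`,
with entry `1` if `j ∈ A` and `0` otherwise. -/
def binomMatrix (V : Type*) [Fintype V] [DecidableEq V] (k : ℕ) :
    Matrix {s : Finset V // s.card = k} V ℝ :=
  fun A j => if j ∈ A.1 then 1 else 0

/-- The Kneser graph `K(n,k)`. -/
def kneserGraph (n k : ℕ) : SimpleGraph {s : Finset (Fin n) // s.card = k} where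
  Adj A B := A ≠ B ∧ Disjoint A.1 B.1
  symm := by constructor; rintro A B ⟨h1, h2⟩; exact ⟨h1.symm, h2.symm⟩
  loopless := by constructor; rintro A ⟨h1, _⟩; exact h1 rfl

end

noncomputable section

lemma lapMat_mulVec_eq {V : Type*} [Fintype V] [DecidableEq V] (G : SimpleGraph V)
    [inst : DecidableRel G.Adj] (v : V → ℝ) (x : V) :
    (lapMat G).mulVec v x = ∑ y, (if G.Adj x y then v x - v y else 0) := by
  have h : lapMat G = G.lapMatrix ℝ := by
    unfold lapMat
    congr!
  rw [h, SimpleGraph.lapMatrix_mulVec_apply]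
  rw [show (∑ y, (if G.Adj x y then v x - v y else 0)) =
      ∑ y ∈ Finset.univ.filter (G.Adj x), (v x - v y) from (Finset.sum_filter _ _).symm]
  rw [← SimpleGraph.neighborFinset_eq_filter, Finset.sum_sub_distrib, Finset.sum_const,
    nsmul_eq_mul, SimpleGraph.degree]

lemma token_adj_iff {V : Type*} [DecidableEq V] (G : SimpleGraph V) {k : ℕ}
    (A B : {s : Finset V // s.card = k}) :
    (tokenGraph G k).Adj A B ↔
      ∃ a ∈ A.1, ∃ b ∉ A.1, G.Adj a b ∧ B.1 = insert b (A.1.erase a) := by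
  constructor
  · rintro ⟨a, b, hab, ha, hb, hsd⟩
    have hmem : ∀ x, ((x ∈ A.1 ∧ x ∉ B.1) ∨ (x ∈ B.1 ∧ x ∉ A.1)) ↔ (x = a ∨ x = b) := by
      intro x
      have := Finset.ext_iff.mp hsd x
      simpa [Finset.mem_symmDiff] using this
    have hbA : b ∉ A.1 := by
      rcases (hmem b).mpr (Or.inr rfl) with h | h
      · exact absurd hb h.2
      · exact h.2
    have haB : a ∉ B.1 := by
      rcases (hmem a).mpr (Or.inl rfl) with h | h
      · exact h.2
      · exact absurd ha h.2
    refine ⟨a, ha, b, hbA, hab, ?_⟩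
    ext x
    simp only [Finset.mem_insert, Finset.mem_erase]
    constructor
    · intro hxB
      by_cases hxA : x ∈ A.1
      · right
        refine ⟨?_, hxA⟩
        rintro rfl
        exact haB hxB
      · rcases (hmem x).mp (Or.inr ⟨hxB, hxA⟩) with rfl | rfl
        · exact absurd ha hxA
        · exact Or.inl rfl
    · rintro (rfl | ⟨hxa, hxA⟩)
      · exact hb
      · by_contra hxB
        rcases (hmem x).mp (Or.inl ⟨hxA, hxB⟩) with rfl | rfl
        · exact hxa rfl
        · exact hbA hxA
  · rintro ⟨a, ha, b, hb, hab, hB⟩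
    have hne : a ≠ b := fun h => hb (h ▸ ha)
    refine ⟨a, b, hab, ha, by rw [hB]; exact Finset.mem_insert_self _ _, ?_⟩
    ext x
    simp only [Finset.mem_symmDiff, hB, Finset.mem_insert, Finset.mem_erase, Finset.mem_singleton]
    constructor
    · rintro (⟨hxA, hx⟩ | ⟨(rfl | ⟨hxa, hxA⟩), hxA'⟩)
      · left
        by_contra hxa
        exact hx (Or.inr ⟨fun h => hxa (by rw [h]), hxA⟩)
      · exact Or.inr rfl
      · exact absurd hxA hxA'
    · rintro (rfl | rfl)
      · exact Or.inl ⟨ha, by push_neg; exact ⟨hne, fun h _ => absurd rfl h⟩⟩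
      · exact Or.inr ⟨Or.inl rfl, hb⟩

lemma token_lift {V : Type*} [Fintype V] [DecidableEq V] (G : SimpleGraph V) (k : ℕ)
    (v : V → ℝ) (μ : ℝ) (hv : (lapMat G).mulVec v = μ • v) :
    (lapMat (tokenGraph G k)).mulVec (fun A => ∑ a ∈ A.1, v a)
      = μ • (fun A => ∑ a ∈ A.1, v a) := by
  classical
  set w : {s : Finset V // s.card = k} → ℝ := fun A => ∑ a ∈ A.1, v a with hw
  funext A
  rw [lapMat_mulVec_eq]
  -- LHS: sum over neighbors
  have lhs_eq : (∑ B, (if (tokenGraph G k).Adj A B then w A - w B else 0))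
      = ∑ p ∈ (A.1 ×ˢ A.1ᶜ).filter (fun p => G.Adj p.1 p.2), (v p.1 - v p.2) := by
    rw [show (∑ B, (if (tokenGraph G k).Adj A B then w A - w B else 0)) =
        ∑ B ∈ Finset.univ.filter ((tokenGraph G k).Adj A), (w A - w B) from
        (Finset.sum_filter _ _).symm]
    refine (Finset.sum_bij (i := fun p hp =>
        (⟨insert p.2 (A.1.erase p.1), ?_⟩ : {s : Finset V // s.card = k})) ?_ ?_ ?_ ?_).symm
    · -- card
      simp only [Finset.mem_filter, Finset.mem_product, Finset.mem_compl] at hp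
      rw [Finset.card_insert_of_notMem (fun h => hp.1.2 (Finset.mem_of_mem_erase h)),
        Finset.card_erase_of_mem hp.1.1, A.2]
      have : 1 ≤ k := by
        rw [← A.2]
        exact Finset.card_pos.mpr ⟨p.1, hp.1.1⟩
      omega
    · intro p hp
      simp only [Finset.mem_filter, Finset.mem_product, Finset.mem_compl] at hp
      simp only [Finset.mem_filter, Finset.mem_univ, true_and]
      rw [token_adj_iff]
      exact ⟨p.1, hp.1.1, p.2, hp.1.2, hp.2, rfl⟩
    · intro p hp q hq heq
      simp only [Finset.mem_filter, Finset.mem_product, Finset.mem_compl] at hp hq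
      have heq' : insert p.2 (A.1.erase p.1) = insert q.2 (A.1.erase q.1) :=
        congrArg Subtype.val heq
      have hb : p.2 = q.2 := by
        have : p.2 ∈ insert q.2 (A.1.erase q.1) := by
          rw [← heq']; exact Finset.mem_insert_self _ _
        rcases Finset.mem_insert.mp this with h | h
        · exact h
        · exact absurd (Finset.mem_of_mem_erase h) hp.1.2
      have ha : p.1 = q.1 := by
        by_contra hne
        have h1 : p.1 ∈ insert q.2 (A.1.erase q.1) := by
          by_cases hq1 : p.1 = q.1
          · exact absurd hq1 hne
          · exact Finset.mem_insert_of_mem (Finset.mem_erase.mpr ⟨hq1, hp.1.1⟩)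
        rw [← heq'] at h1
        rcases Finset.mem_insert.mp h1 with h | h
        · exact hp.1.2 (h ▸ hp.1.1)
        · exact (Finset.mem_erase.mp h).1 rfl
      exact Prod.ext ha hb
    · intro B hB
      simp only [Finset.mem_filter, Finset.mem_univ, true_and] at hB
      rw [token_adj_iff] at hB
      obtain ⟨a, ha, b, hb, hab, hBeq⟩ := hB
      refine ⟨(a, b), ?_, ?_⟩
      · simp only [Finset.mem_filter, Finset.mem_product, Finset.mem_compl]
        exact ⟨⟨ha, hb⟩, hab⟩
      · exact Subtype.ext hBeq.symm
    · intro p hp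
      simp only [Finset.mem_filter, Finset.mem_product, Finset.mem_compl] at hp
      have hni : p.2 ∉ A.1.erase p.1 := fun h => hp.1.2 (Finset.mem_of_mem_erase h)
      simp only [hw]
      rw [Finset.sum_insert hni, Finset.sum_erase_eq_sub hp.1.1]
      ring
  rw [lhs_eq]
  -- RHS
  have hμ : ∀ a, μ * v a = ∑ y, (if G.Adj a y then v a - v y else 0) := by
    intro a
    rw [← lapMat_mulVec_eq, hv]
    rfl
  have rhs_eq : (μ • w) A = ∑ a ∈ A.1, ∑ y, (if G.Adj a y then v a - v y else 0) := by
    simp only [Pi.smul_apply, smul_eq_mul, hw, Finset.mul_sum]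
    exact Finset.sum_congr rfl fun a _ => hμ a
  rw [rhs_eq]
  -- split inner sum
  have hsplit : ∀ a, (∑ y, (if G.Adj a y then v a - v y else 0))
      = (∑ y ∈ A.1, (if G.Adj a y then v a - v y else 0))
        + ∑ y ∈ A.1ᶜ, (if G.Adj a y then v a - v y else 0) :=
    fun a => (Finset.sum_add_sum_compl A.1 _).symm
  simp_rw [hsplit, Finset.sum_add_distrib]
  have hzero : (∑ a ∈ A.1, ∑ y ∈ A.1, (if G.Adj a y then v a - v y else 0)) = 0 := by
    have h1 : ∀ a y, (if G.Adj a y then v a - v y else 0)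
        = -(if G.Adj y a then v y - v a else 0) := by
      intro a y
      by_cases h : G.Adj a y
      · simp [h, h.symm]
      · have h2 : ¬ G.Adj y a := fun h' => h (h'.symm)
        simp [h, h2]
    set S := ∑ a ∈ A.1, ∑ y ∈ A.1, (if G.Adj a y then v a - v y else 0) with hS
    have key : S = -S := by
      calc S = ∑ a ∈ A.1, ∑ y ∈ A.1, -(if G.Adj y a then v y - v a else 0) := by
              refine Finset.sum_congr rfl fun a _ => Finset.sum_congr rfl fun y _ => h1 a y
        _ = -∑ a ∈ A.1, ∑ y ∈ A.1, (if G.Adj y a then v y - v a else 0) := by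
              simp [Finset.sum_neg_distrib]
        _ = -S := by rw [Finset.sum_comm]
    linarith
  rw [hzero, zero_add]
  rw [← Finset.sum_product']
  rw [Finset.sum_filter]

lemma cos_congr {n : ℕ} [NeZero n] (j : ℕ) {a b : ℤ} (h : ((a : ZMod n) = (b : ZMod n))) :
    Real.cos (2 * π * j * a / n) = Real.cos (2 * π * j * b / n) := by
  have hd : (n : ℤ) ∣ b - a := Int.ModEq.dvd ((ZMod.intCast_eq_intCast_iff a b n).mp h)
  obtain ⟨t, ht⟩ := hd
  have hb : (b : ℝ) = (a : ℝ) + (n : ℝ) * (t : ℝ) := by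
    have : b = a + n * t := by omega
    rw [this]; push_cast; ring
  have hn0 : (n : ℝ) ≠ 0 := Nat.cast_ne_zero.mpr (NeZero.ne n)
  rw [hb, show 2 * π * j * ((a : ℝ) + (n : ℝ) * t) / n
      = 2 * π * j * a / n + ((j * t : ℤ) : ℝ) * (2 * π) by push_cast; field_simp,
    Real.cos_add_int_mul_two_pi]

lemma cycle_adj_iff {n : ℕ} [NeZero n] (hn : 4 ≤ n) (x y : ZMod n) :
    (cycleG n).Adj x y ↔ (y = x - 1 ∨ y = x + 1) := by
  have h1 : (1 : ZMod n) ≠ 0 := by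
    haveI : Fact (1 < n) := ⟨by omega⟩
    exact one_ne_zero
  constructor
  · rintro ⟨hne, h | h⟩
    · left; linear_combination -h
    · right; linear_combination h
  · rintro (rfl | rfl)
    · refine ⟨fun h => h1 ?_, Or.inl (by ring)⟩
      linear_combination h
    · refine ⟨fun h => h1 ?_, Or.inr (by ring)⟩
      linear_combination -h

lemma cycle_eigen {n : ℕ} [NeZero n] (hn : 4 ≤ n) (j : ℕ) :
    (lapMat (cycleG n)).mulVec (fun x => Real.cos (2 * π * j * ((x.val : ℤ) : ℝ) / n))
      = (2 - 2 * Real.cos (2 * π * j / n)) •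
        (fun x => Real.cos (2 * π * j * ((x.val : ℤ) : ℝ) / n)) := by
  classical
  set v : ZMod n → ℝ := fun x => Real.cos (2 * π * j * ((x.val : ℤ) : ℝ) / n) with hv
  have hn0 : (n : ℝ) ≠ 0 := Nat.cast_ne_zero.mpr (NeZero.ne n)
  funext x
  rw [lapMat_mulVec_eq]
  have hcast : ∀ z : ZMod n, ((z.val : ℤ) : ZMod n) = z := by
    intro z
    push_cast
    simp [ZMod.natCast_val, ZMod.cast_id]
  have h2 : (x - 1) ≠ (x + 1) := by
    intro h
    have h20 : (2 : ZMod n) = 0 := by linear_combination -h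
    have : ((2 : ℕ) : ZMod n) = 0 := by push_cast; exact h20
    rw [ZMod.natCast_eq_zero_iff] at this
    have := Nat.le_of_dvd (by norm_num) this
    omega
  have hsum : (∑ y, (if (cycleG n).Adj x y then v x - v y else 0))
      = (v x - v (x - 1)) + (v x - v (x + 1)) := by
    have step1 : ∀ y : ZMod n, (if (cycleG n).Adj x y then v x - v y else 0)
        = (if y = x - 1 then v x - v y else 0) + (if y = x + 1 then v x - v y else 0) := by
      intro y
      rw [if_congr (cycle_adj_iff hn x y) rfl rfl]
      by_cases hy1 : y = x - 1
      · subst hy1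
        simp [h2]
      · by_cases hy2 : y = x + 1
        · subst hy2
          simp [h2.symm, hy1]
        · simp [hy1, hy2]
    simp_rw [step1, Finset.sum_add_distrib]
    rw [Finset.sum_ite_eq' Finset.univ (x - 1) (fun y => v x - v y),
      Finset.sum_ite_eq' Finset.univ (x + 1) (fun y => v x - v y)]
    simp
  rw [hsum]
  -- now compute v (x ± 1)
  have hplus : v (x + 1) = Real.cos (2 * π * j * (((x.val : ℤ) : ℝ) + 1) / n) := by
    have hc : (((x + 1).val : ℤ) : ZMod n) = (((x.val : ℤ) + 1 : ℤ) : ZMod n) := by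
      push_cast
      simp [ZMod.natCast_val, ZMod.cast_id]
    have hcc := cos_congr (n := n) j hc
    simp only [hv]
    push_cast at hcc ⊢
    exact hcc
  have hminus : v (x - 1) = Real.cos (2 * π * j * (((x.val : ℤ) : ℝ) - 1) / n) := by
    have hc : (((x - 1).val : ℤ) : ZMod n) = (((x.val : ℤ) - 1 : ℤ) : ZMod n) := by
      push_cast
      simp [ZMod.natCast_val, ZMod.cast_id]
    have hcc := cos_congr (n := n) j hc
    simp only [hv]
    push_cast at hcc ⊢
    exact hcc
  rw [hplus, hminus]
  have e1 : 2 * π * j * (((x.val : ℤ) : ℝ) + 1) / n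
      = 2 * π * j * ((x.val : ℤ) : ℝ) / n + 2 * π * j / n := by field_simp
  have e2 : 2 * π * j * (((x.val : ℤ) : ℝ) - 1) / n
      = 2 * π * j * ((x.val : ℤ) : ℝ) / n - 2 * π * j / n := by field_simp
  rw [e1, e2, Real.cos_add, Real.cos_sub]
  simp only [Pi.smul_apply, smul_eq_mul, hv]
  ring

theorem stmt_13 {n k : ℕ} [NeZero n] (hn : 4 ≤ n) (hk : 2 ≤ k) (hkn : k ≤ n / 2)
    (j : ℕ) (hj : j < n) :
    IsLapEigen (tokenGraph (cycleG n) k) (4 * Real.sin ((j : ℝ) * π / (n : ℝ)) ^ 2) := by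
  classical
  set v : ZMod n → ℝ := fun x => Real.cos (2 * π * j * ((x.val : ℤ) : ℝ) / n) with hv
  refine ⟨fun A => ∑ a ∈ A.1, v a, ?_, ?_⟩
  · -- nonzero
    intro hw0
    have hconst : ∀ a b : ZMod n, v a = v b := by
      intro a b
      rcases eq_or_ne a b with rfl | hab
      · rfl
      have hcard : k - 1 ≤ (Finset.univ \ ({a, b} : Finset (ZMod n))).card := by
        rw [Finset.card_sdiff_of_subset (Finset.subset_univ _), Finset.card_univ, ZMod.card,
          Finset.card_pair hab]
        omega
      obtain ⟨t, hts, htc⟩ := Finset.exists_subset_card_eq hcard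
      have hat : a ∉ t := by
        intro h
        have := hts h
        rw [Finset.mem_sdiff] at this
        exact this.2 (by simp)
      have hbt : b ∉ t := by
        intro h
        have := hts h
        rw [Finset.mem_sdiff] at this
        exact this.2 (by simp)
      have hca : (insert a t).card = k := by
        rw [Finset.card_insert_of_notMem hat, htc]; omega
      have hcb : (insert b t).card = k := by
        rw [Finset.card_insert_of_notMem hbt, htc]; omega
      have h1 := congrFun hw0 ⟨insert a t, hca⟩
      have h2 := congrFun hw0 ⟨insert b t, hcb⟩
      simp only [Pi.zero_apply] at h1 h2
      rw [Finset.sum_insert hat] at h1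
      rw [Finset.sum_insert hbt] at h2
      linarith
    have hv0 : v 0 = 1 := by
      simp [hv, ZMod.val_zero]
    obtain ⟨A0, _, hA0c⟩ := Finset.exists_subset_card_eq (s := (Finset.univ : Finset (ZMod n))) (n := k)
      (by rw [Finset.card_univ, ZMod.card]; omega)
    have hz := congrFun hw0 ⟨A0, hA0c⟩
    simp only [Pi.zero_apply] at hz
    have hsum : ∑ a ∈ A0, v a = (k : ℝ) := by
      rw [Finset.sum_congr rfl (fun a _ => (hconst a 0).trans hv0), Finset.sum_const, hA0c]
      simp
    rw [hsum] at hz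
    exact absurd hz (by exact_mod_cast (by omega : k ≠ 0))
  · have hmu : (4 * Real.sin ((j : ℝ) * π / (n : ℝ)) ^ 2)
        = 2 - 2 * Real.cos (2 * π * j / n) := by
      have h2x : 2 * π * (j : ℝ) / n = 2 * ((j : ℝ) * π / n) := by ring
      rw [h2x, Real.cos_two_mul]
      have := Real.sin_sq_add_cos_sq ((j : ℝ) * π / n)
      nlinarith [this]
    rw [hmu]
    exact token_lift (cycleG n) k v _ (cycle_eigen hn j)

end
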